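/- For all m≥1, the sequence γ defined by γ(0)=0 and γ(m)=2^m(m+1)+Σ_{k=1}^{m-1}γ(k)·C(m+1,m−k) satisfies the closed form γ(m)=Σ_{k=0}^{m-1} 2^{m−k}·(m−k+1)·C(m+1,k)·B_k, where B_k is the k-th ordered Bell number. -/

import Mathlib

open Finset

private lemma inner_eq (m l : ℕ) :
    (∑ j ∈ Finset.Ico (l+1) m,
      (2:ℤ) ^ (j - l) * ((j:ℤ) - l + 1) * ((j+1).choose l : ℤ) * ((m + 1).choose (m - j) : ℤ))
  = ∑ k ∈ Finset.Ico (l+1) m,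
      (2:ℤ) ^ (m - k) * ((m:ℤ) - k + 1) * ((m+1).choose k : ℤ) * (k.choose (k - l) : ℤ) := by
  refine Finset.sum_nbij' (fun j => m + l - j) (fun k => m + l - k) ?_ ?_ ?_ ?_ ?_
  · intro a ha; simp only [Finset.mem_Ico] at *; omega
  · intro a ha; simp only [Finset.mem_Ico] at *; omega
  · intro a ha; simp only [Finset.mem_Ico] at ha; beta_reduce; omega
  · intro a ha; simp only [Finset.mem_Ico] at ha; beta_reduce; omega
  · intro j hj
    simp only [Finset.mem_Ico] at hj
    obtain ⟨hl, hm⟩ := hj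
    beta_reduce
    have h1 : m - (m + l - j) = j - l := by omega
    have h2 : (m + l - j) - l = m - j := by omega
    have h3 : ((m + l - j : ℕ) : ℤ) = (m : ℤ) + l - j := by omega
    have h4 : ((m+1).choose (m + l - j) : ℤ) * ((m + l - j).choose (m - j) : ℤ)
        = ((m+1).choose (m - j) : ℤ) * ((j+1).choose l : ℤ) := by
      have := Nat.choose_mul (n := m + 1) (k := m + l - j) (s := m - j)
        (by omega)
      have e1 : m + 1 - (m - j) = j + 1 := by omega
      have e2 : (m + l - j) - (m - j) = l := by omega
      rw [e1, e2] at this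
      exact_mod_cast congrArg (Nat.cast : ℕ → ℤ) this
    rw [h1, h2, h3]
    have h5 : (m:ℤ) - ((m:ℤ) + l - j) + 1 = (j:ℤ) - l + 1 := by ring
    rw [h5]
    linear_combination (-((2:ℤ) ^ (j - l) * ((j:ℤ) - l + 1))) * h4

private lemma swap_sum (m : ℕ) (f : ℕ → ℕ → ℤ) :
    (∑ j ∈ Finset.Ico 1 m, ∑ k ∈ Finset.range j, f j k)
      = ∑ k ∈ Finset.range m, ∑ j ∈ Finset.Ico (k+1) m, f j k := by
  have h0 : (∑ j ∈ Finset.Ico 1 m, ∑ k ∈ Finset.range j, f j k)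
      = ∑ j ∈ Finset.Ico 0 m, ∑ k ∈ Finset.Ico 0 j, f j k := by
    rcases Nat.eq_zero_or_pos m with h | h
    · simp [h]
    · conv_rhs => rw [Finset.sum_eq_sum_Ico_succ_bot h]
      simp only [← Finset.range_eq_Ico]
      simp
  rw [h0, ← Finset.sum_Ico_Ico_comm' 0 m (fun k j => f j k), Finset.range_eq_Ico]

theorem gamma_closed_form (γ B : ℕ → ℤ)
    (hB0 : B 0 = 1)
    (hB : ∀ n, 1 ≤ n → B n = ∑ k ∈ Finset.Icc 1 n, (n.choose k : ℤ) * B (n - k))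
    (hγ0 : γ 0 = 0)
    (hγ : ∀ m, 1 ≤ m →
      γ m = 2 ^ m * (m + 1) +
        ∑ k ∈ Finset.Icc 1 (m - 1), γ k * ((m + 1).choose (m - k) : ℤ)) :
    ∀ m, 1 ≤ m →
      γ m = ∑ k ∈ Finset.range m,
        2 ^ (m - k) * ((m : ℤ) - k + 1) * ((m + 1).choose k : ℤ) * B k := by
  intro m
  induction m using Nat.strong_induction_on with
  | _ m IH =>
    intro hm
    rw [hγ m hm]
    have hIcc : Finset.Icc 1 (m-1) = Finset.Ico 1 m := by
      ext x; simp only [Finset.mem_Icc, Finset.mem_Ico]; omega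
    have hL : (∑ j ∈ Finset.Icc 1 (m - 1), γ j * ((m + 1).choose (m - j) : ℤ))
        = ∑ l ∈ Finset.range m, (∑ j ∈ Finset.Ico (l+1) m,
            (2:ℤ) ^ (j - l) * ((j:ℤ) - l + 1) * ((j+1).choose l : ℤ)
              * ((m + 1).choose (m - j) : ℤ)) * B l := by
      rw [hIcc]
      have step1 : (∑ j ∈ Finset.Ico 1 m, γ j * ((m + 1).choose (m - j) : ℤ))
          = ∑ j ∈ Finset.Ico 1 m, ∑ l ∈ Finset.range j,
              (2:ℤ) ^ (j - l) * ((j:ℤ) - l + 1) * ((j+1).choose l : ℤ)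
                * ((m + 1).choose (m - j) : ℤ) * B l := by
        apply Finset.sum_congr rfl
        intro j hj
        simp only [Finset.mem_Ico] at hj
        rw [IH j hj.2 hj.1, Finset.sum_mul]
        apply Finset.sum_congr rfl
        intro l _; ring
      rw [step1, swap_sum m]
      apply Finset.sum_congr rfl
      intro l _
      rw [Finset.sum_mul]
    have hins : Finset.range m = insert 0 (Finset.Ico 1 m) := by
      ext x; simp only [Finset.mem_range, Finset.mem_insert, Finset.mem_Ico]; omega
    have hR : (∑ k ∈ Finset.range m,
          (2:ℤ) ^ (m - k) * ((m : ℤ) - k + 1) * ((m + 1).choose k : ℤ) * B k)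
        = 2 ^ m * ((m:ℤ) + 1) + ∑ l ∈ Finset.range m, (∑ k ∈ Finset.Ico (l+1) m,
            (2:ℤ) ^ (m - k) * ((m:ℤ) - k + 1) * ((m+1).choose k : ℤ)
              * (k.choose (k - l) : ℤ)) * B l := by
      conv_lhs => rw [hins]
      rw [Finset.sum_insert (by simp)]
      have h0 : (2:ℤ) ^ (m - 0) * ((m : ℤ) - ((0:ℕ):ℤ) + 1) * (((m + 1).choose 0 : ℕ) : ℤ) * B 0
          = 2 ^ m * ((m:ℤ) + 1) := by simp [hB0]
      rw [h0]
      congr 1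
      have step2 : (∑ k ∈ Finset.Ico 1 m,
            (2:ℤ) ^ (m - k) * ((m : ℤ) - k + 1) * ((m + 1).choose k : ℤ) * B k)
          = ∑ k ∈ Finset.Ico 1 m, ∑ l ∈ Finset.range k,
              (2:ℤ) ^ (m - k) * ((m:ℤ) - k + 1) * ((m+1).choose k : ℤ)
                * (k.choose (k - l) : ℤ) * B l := by
        apply Finset.sum_congr rfl
        intro k hk
        simp only [Finset.mem_Ico] at hk
        rw [hB k hk.1, Finset.mul_sum]
        refine Finset.sum_nbij' (fun i => k - i) (fun l => k - l) ?_ ?_ ?_ ?_ ?_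
        · intro a ha; simp only [Finset.mem_Icc, Finset.mem_range] at *; omega
        · intro a ha; simp only [Finset.mem_Icc, Finset.mem_range] at *; omega
        · intro a ha; simp only [Finset.mem_Icc] at ha; beta_reduce; omega
        · intro a ha; simp only [Finset.mem_range] at ha; beta_reduce; omega
        · intro i hi
          simp only [Finset.mem_Icc] at hi
          beta_reduce
          have : k - (k - i) = i := by omega
          rw [this]
          ring
      rw [step2, swap_sum m]
      apply Finset.sum_congr rfl
      intro l _
      rw [Finset.sum_mul]
    rw [hL, hR]
    congr 1
    apply Finset.sum_congr rfl
    intro l _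
    rw [inner_eq]
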